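/- Let CL(2^ω) be the space of clopen subsets of the Cantor space, topologized as a subspace of 2^{2^ω}, and for each positive integer k let A_k be the set of k-adequated clopen sets. Let X = ⋃_{k∈ω} A_{k+1}. Then any set S ⊆ X with |S ∩ A_k| ≤ 1 for each k is closed in X; consequently X is not a q⁺ space. -/

import Mathlib

/-- The Cantor space 2^ω. -/
abbrev Cant : Type := ℕ → Bool

/-- Two sequences s, t ∈ 2^k are linked if they differ exactly in the last coordinate. -/
def Linked {k : ℕ} (s t : Fin k → Bool) : Prop :=
  s ≠ t ∧ ∀ i : Fin k, (i : ℕ) + 1 < k → s i = t i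

/-- An element g of 2^(2^ω) (identified with the subset {α | g α = true} of the Cantor
space) is k-adequated: it is a union [s₁] ∪ ⋯ ∪ [s_m] of cylinders with all sᵢ ∈ 2^k
pairwise not linked. -/
def Adequated (k : ℕ) (g : Cant → Bool) : Prop :=
  ∃ T : Finset (Fin k → Bool), T.Nonempty ∧
    (∀ s ∈ T, ∀ t ∈ T, s ≠ t → ¬ Linked s t) ∧
    ∀ α : Cant, g α = true ↔ ∃ s ∈ T, ∀ i : Fin k, α i = s i

/-- The set A_k of k-adequated clopen sets, inside 2^(2^ω). -/
def Ak (k : ℕ) : Set (Cant → Bool) := {g | Adequated k g}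

/-- The space X = ⋃_k A_{k+1}, as a subspace of 2^(2^ω). -/
def Xad : Set (Cant → Bool) := ⋃ k : ℕ, Ak (k + 1)


/-- an adequated set omits a full child cylinder below every node. -/
lemma omitChild {m : ℕ} {g : Cant → Bool} (hg : g ∈ Ak (m + 1)) (v : Fin m → Bool) :
    ∃ b : Bool, ∀ β : Cant, (∀ i : Fin m, β i = v i) → β m = b → g β = false := by
  obtain ⟨T, _, hnl, hchar⟩ := hg
  by_contra hcon
  push_neg at hcon
  have key : ∀ b : Bool, ∃ s ∈ T, (∀ i : Fin m, s i.castSucc = v i) ∧ s (Fin.last m) = b := by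
    intro b
    obtain ⟨β, hext, hβm, hβg⟩ := hcon b
    have hβt : g β = true := by cases h : g β with
      | false => exact absurd h hβg
      | true => rfl
    obtain ⟨s, hsT, hs⟩ := (hchar β).mp hβt
    refine ⟨s, hsT, fun i => ?_, ?_⟩
    · have h1 := hs i.castSucc
      have h2 := hext i
      simp only [Fin.coe_castSucc] at h1
      rw [← h1, h2]
    · have h1 := hs (Fin.last m)
      simp only [Fin.val_last] at h1
      rw [← h1, hβm]
  obtain ⟨s0, hs0T, hs0v, hs0b⟩ := key false
  obtain ⟨s1, hs1T, hs1v, hs1b⟩ := key true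
  have hne : s0 ≠ s1 := by
    intro h; rw [h, hs1b] at hs0b; simp at hs0b
  exact hnl s0 hs0T s1 hs1T hne ⟨hne, by
    intro i hi
    have hi' : (i : ℕ) < m := by omega
    have : i = (⟨(i : ℕ), hi'⟩ : Fin m).castSucc := by
      ext; simp
    rw [this, hs0v, hs1v]⟩

/-- a k-adequated set contains a full level-k cylinder. -/
lemma cylinder_in {K : ℕ} {x : Cant → Bool} (hx : x ∈ Ak K) :
    ∃ s₀ : Fin K → Bool, ∀ α : Cant, (∀ i : Fin K, α i = s₀ i) → x α = true := by
  obtain ⟨T, ⟨s₀, hs₀⟩, _, hchar⟩ := hx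
  exact ⟨s₀, fun α hα => (hchar α).mpr ⟨s₀, hs₀, hα⟩⟩

lemma ak_pairwise_disjoint {k j : ℕ} (hkj : k < j) {g : Cant → Bool}
    (hk : g ∈ Ak k) (hj : g ∈ Ak j) : False := by
  obtain ⟨m, rfl⟩ : ∃ m, j = m + 1 := ⟨j - 1, by omega⟩
  have hkm : k ≤ m := by omega
  obtain ⟨s₀, hs₀⟩ := cylinder_in hk
  set v : Fin m → Bool := fun i => if h : (i : ℕ) < k then s₀ ⟨i, h⟩ else false with hv
  obtain ⟨b, hb⟩ := omitChild hj v
  set β : Cant := fun n => if h : n < m then v ⟨n, h⟩ else b with hβ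
  have h1 : g β = false := by
    refine hb β (fun i => ?_) ?_
    · simp only [hβ, dif_pos i.isLt]
    · simp only [hβ, dif_neg (lt_irrefl m)]
  have h2 : g β = true := by
    refine hs₀ β (fun i => ?_)
    have him : (i : ℕ) < m := lt_of_lt_of_le i.isLt hkm
    simp only [hβ, dif_pos him, hv, dif_pos i.isLt]
  rw [h1] at h2; simp at h2

/-- each A_j is a finite set. -/
lemma ak_finite (j : ℕ) : (Ak j).Finite := by
  set Φ : Finset (Fin j → Bool) → (Cant → Bool) :=
    fun T α => decide (∃ s ∈ T, ∀ i : Fin j, α i = s i) with hΦ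
  refine Set.Finite.subset (Set.finite_range Φ) ?_
  rintro g ⟨T, _, _, hchar⟩
  refine ⟨T, ?_⟩
  funext α
  have h1 : (Φ T α = true) ↔ (g α = true) := by
    simp only [hΦ, decide_eq_true_eq]
    exact (hchar α).symm
  cases hg : g α with
  | true => exact h1.mpr hg
  | false =>
    cases hΦα : Φ T α with
    | false => rfl
    | true => rw [h1.mp hΦα] at hg; exact hg

lemma selector_closed (S : Set (Cant → Bool)) (hXS : S ⊆ Xad)
    (hsub : ∀ k : ℕ, (S ∩ Ak k).Subsingleton) :
    IsClosed {p : ↥Xad | (p : Cant → Bool) ∈ S} := by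
  rw [← isOpen_compl_iff, isOpen_iff_mem_nhds]
  intro p hp
  have hpS : (p : Cant → Bool) ∉ S := hp
  set x : Cant → Bool := ↑p with hxdef
  obtain ⟨K', hxA⟩ : ∃ k, x ∈ Ak (k + 1) := Set.mem_iUnion.mp p.2
  set K : ℕ := K' + 1 with hKdef
  obtain ⟨s₀, hs₀⟩ := cylinder_in hxA
  -- choice of omitted child bits
  have h_ex : ∀ (m : ℕ) (v : Fin m → Bool), ∃ b : Bool,
      ∀ g ∈ S ∩ Ak (m + 1), ∀ β : Cant,
        (∀ i : Fin m, β i = v i) → β m = b → g β = false := by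
    intro m v
    by_cases hne : (S ∩ Ak (m + 1)).Nonempty
    · obtain ⟨g₀, hg₀⟩ := hne
      obtain ⟨b, hb⟩ := omitChild hg₀.2 v
      exact ⟨b, fun g hg β h1 h2 => by rw [hsub (m + 1) hg hg₀]; exact hb β h1 h2⟩
    · exact ⟨false, fun g hg => (hne ⟨g, hg⟩).elim⟩
  choose o ho using h_ex
  -- the diagonal point
  let f : (n : ℕ) → Fin n → Bool :=
    fun n => Nat.rec Fin.elim0
      (fun n fn => Fin.snoc fn (if h : n < K then s₀ ⟨n, h⟩ else o n fn)) n
  set α : Cant := fun n => f (n + 1) (Fin.last n) with hαdef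
  have hf : ∀ n, f (n + 1) =
      Fin.snoc (f n) (if h : n < K then s₀ ⟨n, h⟩ else o n (f n)) := fun n => rfl
  have hα' : ∀ n, α n = (if h : n < K then s₀ ⟨n, h⟩ else o n (f n)) := by
    intro n
    show f (n + 1) (Fin.last n) = _
    rw [hf n, Fin.snoc_last]
  have hcoh : ∀ (n : ℕ) (i : Fin n), f n i = α (i : ℕ) := by
    intro n
    induction n with
    | zero => exact fun i => i.elim0
    | succ n ih =>
      intro i
      refine Fin.lastCases ?_ ?_ i
      · show f (n + 1) (Fin.last n) = α ((Fin.last n : ℕ))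
        simp only [Fin.val_last]
        rfl
      · intro j
        show f (n + 1) j.castSucc = α ((j.castSucc : ℕ))
        rw [hf n, Fin.snoc_castSucc]
        simp only [Fin.coe_castSucc]
        exact ih j
  have hxα : x α = true := by
    apply hs₀
    intro i
    rw [hα' i, dif_pos i.isLt]
  have hhigh : ∀ m, K ≤ m → ∀ g, g ∈ S ∩ Ak (m + 1) → g α = false := by
    intro m hKm g hg
    refine ho m (f m) g hg α (fun i => (hcoh m i).symm) ?_
    rw [hα' m, dif_neg (by omega)]
  -- separating points for low levels
  have hβex : ∀ j : ℕ, ∃ β : Cant, ∀ g ∈ S ∩ Ak j, g β ≠ x β := by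
    intro j
    by_cases hne : (S ∩ Ak j).Nonempty
    · obtain ⟨g₀, hg₀⟩ := hne
      have hgx : g₀ ≠ x := fun h => hpS (h ▸ hg₀.1)
      obtain ⟨β, hβ⟩ := Function.ne_iff.mp hgx
      exact ⟨β, fun g hg => (hsub j hg hg₀) ▸ hβ⟩
    · exact ⟨fun _ => false, fun g hg => ((hne ⟨g, hg⟩).elim)⟩
  choose β hβ using hβex
  -- the neighborhood
  set V : Set (Cant → Bool) :=
    {g | g α = x α} ∩ ⋂ j ∈ Finset.range (K + 1), {g | g (β j) = x (β j)} with hVdef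
  have hVopen : IsOpen V := by
    apply IsOpen.inter
    · show IsOpen ((fun g : Cant → Bool => g α) ⁻¹' ({x α} : Set Bool))
      exact (continuous_apply α).isOpen_preimage _ (isOpen_discrete _)
    · refine isOpen_biInter_finset (fun j _ => ?_)
      show IsOpen ((fun g : Cant → Bool => g (β j)) ⁻¹' ({x (β j)} : Set Bool))
      exact (continuous_apply (β j)).isOpen_preimage _ (isOpen_discrete _)
  refine Filter.mem_of_superset
    ((hVopen.preimage continuous_subtype_val).mem_nhds ?_) ?_
  · refine ⟨rfl, ?_⟩
    exact Set.mem_iInter₂.mpr fun j _ => rfl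
  · intro q hq hqS
    obtain ⟨k', hk⟩ : ∃ k, (q : Cant → Bool) ∈ Ak (k + 1) := Set.mem_iUnion.mp q.2
    rcases le_or_gt K (k' + 1) with hle | hlt
    · rcases eq_or_lt_of_le hle with heq | hlt2
      · -- k'+1 = K : low case also covered below; handle via β
        have hjr : k' + 1 ∈ Finset.range (K + 1) := Finset.mem_range.mpr (by omega)
        have h1 := Set.mem_iInter₂.mp hq.2 (k' + 1) hjr
        exact hβ (k' + 1) (q : Cant → Bool) ⟨hqS, hk⟩ h1
      · -- K < k'+1 : high case
        have hKk : K ≤ k' := by omega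
        have h0 := hhigh k' hKk (q : Cant → Bool) ⟨hqS, hk⟩
        have h1 : (q : Cant → Bool) α = x α := hq.1
        rw [hxα, h0] at h1
        exact Bool.false_ne_true h1
    · have hjr : k' + 1 ∈ Finset.range (K + 1) := Finset.mem_range.mpr (by omega)
      have h1 := Set.mem_iInter₂.mp hq.2 (k' + 1) hjr
      exact hβ (k' + 1) (q : Cant → Bool) ⟨hqS, hk⟩ h1


open Classical

def xzero : Cant → Bool := fun γ => !γ 0

lemma xzero_mem : xzero ∈ Ak 1 := by
  refine ⟨{fun _ => false}, ⟨fun _ => false, Finset.mem_singleton_self _⟩, ?_, ?_⟩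
  · intro s hs t ht hne
    rw [Finset.mem_singleton] at hs ht
    exact (hne (hs.trans ht.symm)).elim
  · intro α
    constructor
    · intro h
      refine ⟨fun _ => false, Finset.mem_singleton_self _, fun i => ?_⟩
      have h0 : (i : ℕ) = 0 := by omega
      rw [h0]
      simpa [xzero] using h
    · rintro ⟨s, hs, hα⟩
      rw [Finset.mem_singleton] at hs
      subst hs
      have h0 := hα 0
      simp only [Fin.val_zero] at h0
      simp [xzero, h0]

lemma separation (I : Finset Cant) : ∃ N : ℕ, 1 ≤ N ∧
    ∀ γ ∈ I, ∀ γ' ∈ I, γ ≠ γ' → ∃ i, i < N ∧ γ i ≠ γ' i := by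
  have hD : ∀ γ γ' : Cant, γ ≠ γ' → ∃ n, γ n ≠ γ' n := fun γ γ' h => Function.ne_iff.mp h
  refine ⟨1 + I.sup (fun γ => I.sup (fun γ' =>
      (if h : γ = γ' then 0 else (hD γ γ' h).choose) + 1)), Nat.le_add_right 1 _, ?_⟩
  intro γ hγ γ' hγ' hne
  refine ⟨if h : γ = γ' then 0 else (hD γ γ' h).choose, ?_, ?_⟩
  · have h1 : (if h : γ = γ' then 0 else (hD γ γ' h).choose) + 1 ≤
        I.sup (fun γ'' => (if h : γ = γ'' then 0 else (hD γ γ'' h).choose) + 1) :=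
      Finset.le_sup (f := fun γ'' => (if h : γ = γ'' then 0 else (hD γ γ'' h).choose) + 1) hγ'
    have h2 : I.sup (fun γ'' => (if h : γ = γ'' then 0 else (hD γ γ'' h).choose) + 1) ≤
        I.sup (fun γ0 => I.sup (fun γ'' => (if h : γ0 = γ'' then 0 else (hD γ0 γ'' h).choose) + 1)) :=
      Finset.le_sup (f := fun γ0 => I.sup (fun γ'' => (if h : γ0 = γ'' then 0 else (hD γ0 γ'' h).choose) + 1)) hγ
    omega
  · rw [dif_neg hne]
    exact (hD γ γ' hne).choose_spec

lemma approx (I : Finset Cant) : ∃ (N : ℕ) (g : Cant → Bool),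
    g ∈ Ak (N + 1) ∧ g ≠ xzero ∧ ∀ γ ∈ I, g γ = xzero γ := by
  obtain ⟨N, hN1, hsep⟩ := separation I
  set b : Cant → Bool :=
    fun δ => if (∃ γ ∈ I, (∀ i, i < N → γ i = δ i) ∧ γ N = false) then true else false
    with hbdef
  have hbtrue : ∀ δ, b δ = true ↔ (∃ γ ∈ I, (∀ i, i < N → γ i = δ i) ∧ γ N = false) := by
    intro δ
    simp only [hbdef]
    by_cases h : (∃ γ ∈ I, (∀ i, i < N → γ i = δ i) ∧ γ N = false) <;> simp [h]
  have hbext : ∀ δ δ' : Cant, (∀ i, i < N → δ i = δ' i) → b δ = b δ' := by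
    intro δ δ' h
    have hiff : (∃ γ ∈ I, (∀ i, i < N → γ i = δ i) ∧ γ N = false) ↔
        (∃ γ ∈ I, (∀ i, i < N → γ i = δ' i) ∧ γ N = false) := by
      constructor
      · rintro ⟨γ, hγ, h1, h2⟩; exact ⟨γ, hγ, fun i hi => (h1 i hi).trans (h i hi), h2⟩
      · rintro ⟨γ, hγ, h1, h2⟩; exact ⟨γ, hγ, fun i hi => (h1 i hi).trans (h i hi).symm, h2⟩
    simp only [hbdef]
    exact if_congr hiff rfl rfl
  set g : Cant → Bool := fun δ => if (δ 0 = false ∧ δ N = !b δ) then true else false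
    with hgdef
  have hgtrue : ∀ δ, g δ = true ↔ (δ 0 = false ∧ δ N = !b δ) := by
    intro δ
    simp only [hgdef]
    by_cases h : (δ 0 = false ∧ δ N = !b δ) <;> simp [h]
  have hgext : ∀ δ δ' : Cant, (∀ i, i < N + 1 → δ i = δ' i) → g δ = g δ' := by
    intro δ δ' h
    have hb' := hbext δ δ' (fun i hi => h i (by omega))
    simp only [hgdef]
    exact if_congr (by rw [h 0 (by omega), h N (by omega), hb']) rfl rfl
  set pad : (Fin (N + 1) → Bool) → Cant :=
    fun s n => if h : n < N + 1 then s ⟨n, h⟩ else false with hpaddef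
  have hpadlt : ∀ (s : Fin (N + 1) → Bool) (n : ℕ) (h : n < N + 1), pad s n = s ⟨n, h⟩ := by
    intro s n h; simp only [hpaddef]; rw [dif_pos h]
  set ζ : Cant := fun _ => false with hζdef
  set δ₀ : Cant := fun n => if n = N then !b ζ else false with hδ₀def
  have hδ₀low : ∀ i, i < N → δ₀ i = ζ i := by
    intro i hi; simp only [hδ₀def, hζdef]; rw [if_neg (by omega)]
  have hbδ₀ : b δ₀ = b ζ := hbext _ _ hδ₀low
  have hgδ₀ : g δ₀ = true := by
    rw [hgtrue]
    refine ⟨?_, ?_⟩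
    · simp only [hδ₀def]; rw [if_neg (by omega)]
    · rw [hbδ₀]
      simp only [hδ₀def]
      simp
  have hgA : g ∈ Ak (N + 1) := by
    refine ⟨Finset.univ.filter (fun s => g (pad s) = true), ?_, ?_, ?_⟩
    · refine ⟨fun i => δ₀ (i : ℕ), Finset.mem_filter.mpr ⟨Finset.mem_univ _, ?_⟩⟩
      rw [hgext (pad (fun i => δ₀ (i : ℕ))) δ₀ (fun n hn => (hpadlt (fun i => δ₀ (i : ℕ)) n hn).trans rfl)]
      exact hgδ₀
    · intro s hs t ht hne hlink
      apply hne
      have hgs := (Finset.mem_filter.mp hs).2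
      have hgt := (Finset.mem_filter.mp ht).2
      rw [hgtrue] at hgs hgt
      have hlow : ∀ i : Fin (N + 1), (i : ℕ) < N → s i = t i := by
        intro i hi; exact hlink.2 i (by omega)
      have hpadlow : ∀ n, n < N → pad s n = pad t n := by
        intro n hn
        rw [hpadlt s n (by omega), hpadlt t n (by omega)]
        exact hlow ⟨n, by omega⟩ hn
      have hb' : b (pad s) = b (pad t) := hbext _ _ hpadlow
      have hsN : pad s N = pad t N := by rw [hgs.2, hgt.2, hb']
      funext i
      rcases Nat.lt_or_ge (i : ℕ) N with hi | hi
      · exact hlow i hi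
      · have hiN : (i : ℕ) = N := by omega
        have hNlt : N < N + 1 := by omega
        have hieq : (⟨N, hNlt⟩ : Fin (N + 1)) = i := Fin.ext (by simp [hiN])
        have h1 : pad s N = s i := by rw [hpadlt s N hNlt, hieq]
        have h2 : pad t N = t i := by rw [hpadlt t N hNlt, hieq]
        rw [← h1, ← h2, hsN]
    · intro δ
      constructor
      · intro hδ
        refine ⟨fun i => δ (i : ℕ), Finset.mem_filter.mpr ⟨Finset.mem_univ _, ?_⟩,
          fun i => rfl⟩
        rw [hgext (pad (fun i => δ (i : ℕ))) δ (fun n hn => (hpadlt (fun i => δ (i : ℕ)) n hn).trans rfl)]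
        exact hδ
      · rintro ⟨s, hs, hδs⟩
        rw [hgext δ (pad s) (fun n hn => by rw [hpadlt s n hn]; exact hδs ⟨n, hn⟩)]
        exact (Finset.mem_filter.mp hs).2
  set δ₁ : Cant := fun n => if n = N then b ζ else false with hδ₁def
  have hδ₁low : ∀ i, i < N → δ₁ i = ζ i := by
    intro i hi; simp only [hδ₁def, hζdef]; rw [if_neg (by omega)]
  have hbδ₁ : b δ₁ = b ζ := hbext _ _ hδ₁low
  have hgδ₁ : g δ₁ = false := by
    cases hv : g δ₁ with
    | false => rfl
    | true =>
      exfalso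
      have hc := (hgtrue δ₁).mp hv
      have h2 : δ₁ N = b ζ := by simp only [hδ₁def]; simp
      rw [hbδ₁, h2] at hc
      have := hc.2
      cases hb0 : b ζ <;> rw [hb0] at this <;> simp at this
  have hgne : g ≠ xzero := by
    intro h
    have hz : δ₁ 0 = false := by simp only [hδ₁def]; rw [if_neg (by omega)]
    have h1 : xzero δ₁ = true := by simp [xzero, hz]
    rw [← h, hgδ₁] at h1
    exact Bool.false_ne_true h1
  have hagree : ∀ γ ∈ I, g γ = xzero γ := by
    intro γ hγ
    cases hγ0 : γ 0 with
    | false =>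
      have hx : xzero γ = true := by simp [xzero, hγ0]
      rw [hx, hgtrue]
      refine ⟨hγ0, ?_⟩
      cases hbγ : b γ with
      | false =>
        cases hγN : γ N with
        | true => rfl
        | false =>
          exfalso
          have hbt : b γ = true := (hbtrue γ).mpr ⟨γ, hγ, fun i hi => rfl, hγN⟩
          rw [hbγ] at hbt
          exact Bool.false_ne_true hbt
      | true =>
        obtain ⟨γ', hγ', h1, h2⟩ := (hbtrue γ).mp hbγ
        by_cases hee : γ' = γ
        · subst hee; exact h2
        · exfalso
          obtain ⟨i, hi, hine⟩ := hsep γ' hγ' γ hγ hee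
          exact hine (h1 i hi)
    | true =>
      have hx : xzero γ = false := by simp [xzero, hγ0]
      rw [hx]
      cases hv : g γ with
      | false => rfl
      | true =>
        exfalso
        have hc := (hgtrue γ).mp hv
        rw [hγ0] at hc
        exact Bool.noConfusion hc.1
  exact ⟨N, g, hgA, hgne, hagree⟩


/-- any S ⊆ X meeting each A_k in at most one point is closed in X;
consequently X is not a q⁺ space. -/
theorem statement17 :
    (∀ S : Set (Cant → Bool), S ⊆ Xad → (∀ k : ℕ, (S ∩ Ak k).Subsingleton) →
      IsClosed {p : ↥Xad | (p : Cant → Bool) ∈ S}) ∧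
    ¬ (∀ x : ↥Xad, ∀ F : ℕ → Set ↥Xad, (∀ n, (F n).Finite) →
        x ∈ closure (⋃ n, F n) →
        ∃ S : Set ↥Xad, S ⊆ ⋃ n, F n ∧ x ∈ closure S ∧
          ∀ n, (S ∩ F n).Subsingleton) := by
  constructor
  · exact selector_closed
  · intro H
    have hxX : xzero ∈ Xad := Set.mem_iUnion.mpr ⟨0, xzero_mem⟩
    set xpt : ↥Xad := ⟨xzero, hxX⟩ with hxpt
    set F : ℕ → Set ↥Xad :=
      fun n => {p | (p : Cant → Bool) ∈ Ak (n + 1) ∧ (p : Cant → Bool) ≠ xzero} with hF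
    have hFfin : ∀ n, (F n).Finite := by
      intro n
      refine Set.Finite.subset
        ((ak_finite (n + 1)).preimage (Set.injOn_of_injective Subtype.val_injective)) ?_
      intro p hp
      exact hp.1
    have hxcl : xpt ∈ closure (⋃ n, F n) := by
      rw [mem_closure_iff]
      intro U hU hxU
      obtain ⟨W, hWopen, hWU⟩ := isOpen_induced_iff.mp hU
      have hxW : xzero ∈ W := by rw [← hWU] at hxU; exact hxU
      obtain ⟨I, u, hu, hpi⟩ := isOpen_pi_iff.mp hWopen xzero hxW
      obtain ⟨N, g, hgA, hgne, hgag⟩ := approx I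
      have hgX : g ∈ Xad := Set.mem_iUnion.mpr ⟨N, hgA⟩
      refine ⟨⟨g, hgX⟩, ?_, ?_⟩
      · rw [← hWU]
        apply hpi
        intro a ha
        have h2 := (hu a ha).2
        show g a ∈ u a
        rw [hgag a ha]
        exact h2
      · exact Set.mem_iUnion.mpr ⟨N, ⟨hgA, hgne⟩⟩
    obtain ⟨S, hSsub, hxclS, hsel⟩ := H xpt F hFfin hxcl
    set S' : Set (Cant → Bool) := Subtype.val '' S with hS'
    have hS'X : S' ⊆ Xad := by rintro _ ⟨p, _, rfl⟩; exact p.2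
    have hS'sub : ∀ k, (S' ∩ Ak k).Subsingleton := by
      intro k g hg g' hg'
      obtain ⟨⟨p, hpS, rfl⟩, hgk⟩ := hg
      obtain ⟨⟨p', hp'S, rfl⟩, hg'k⟩ := hg'
      obtain ⟨n, hn⟩ := Set.mem_iUnion.mp (hSsub hpS)
      obtain ⟨n', hn'⟩ := Set.mem_iUnion.mp (hSsub hp'S)
      have hkn : k = n + 1 := by
        rcases lt_trichotomy k (n + 1) with h | h | h
        · exact (ak_pairwise_disjoint h hgk hn.1).elim
        · exact h
        · exact (ak_pairwise_disjoint h hn.1 hgk).elim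
      have hkn' : k = n' + 1 := by
        rcases lt_trichotomy k (n' + 1) with h | h | h
        · exact (ak_pairwise_disjoint h hg'k hn'.1).elim
        · exact h
        · exact (ak_pairwise_disjoint h hn'.1 hg'k).elim
      have hnn : n = n' := by omega
      subst hnn
      have hpp : p = p' := hsel n ⟨hpS, hn⟩ ⟨hp'S, hn'⟩
      rw [hpp]
    have hclosed := selector_closed S' hS'X hS'sub
    have hsub2 : S ⊆ {p : ↥Xad | (p : Cant → Bool) ∈ S'} := fun p hp => ⟨p, hp, rfl⟩
    have hxS' : (xpt : Cant → Bool) ∈ S' := by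
      have h1 := closure_mono hsub2 hxclS
      rw [hclosed.closure_eq] at h1
      exact h1
    obtain ⟨p, hpS, hpx⟩ := hxS'
    obtain ⟨n, hn⟩ := Set.mem_iUnion.mp (hSsub hpS)
    exact hn.2 hpx
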